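/- Let d ≥ 3 and let H ⊆ ℕ^2 be the submonoid generated by A = {(j, d-j) : 0 ≤ j ≤ d} \ {(i, d-i)} where 2 ≤ i ≤ d-2. Set h = ∑_{j=0}^{i} (j, d-j) (sum of the first i+1 Veronese generators). Then the set F = {(0,d), (1,d-1), ..., (i-1, d-i+1)} satisfies: h - ∑F = (i, d-i) ∉ H, but for every element a ∈ F, h - ∑(F \ {a}) ∈ H. -/

import Mathlib

/-- `F = {(0,d),…,(i-1,d-i+1)}` is a minimal non-face of the squarefree divisor
complex `Δ_h` of the pinched Veronese semigroup, where
`h = ∑_{j=0}^{i} (j,d-j)`: `h - ∑F = (i,d-i) ∉ H`, while `h - ∑(F\{a}) ∈ H`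
for every `a ∈ F`. -/
theorem stmt_15 (d i : ℕ) (hd : 3 ≤ d) (hi : 2 ≤ i) (hi' : i ≤ d - 2)
    (A : Set (ℕ × ℕ)) (hA : A = {p | p.1 + p.2 = d ∧ p ≠ (i, d - i)})
    (h : ℕ × ℕ) (hh : h = ∑ j ∈ Finset.range (i + 1), ((j, d - j) : ℕ × ℕ))
    (F : Finset (ℕ × ℕ)) (hF : F = (Finset.range i).image fun j => ((j, d - j) : ℕ × ℕ)) :
    (h = (∑ b ∈ F, b) + (i, d - i)) ∧
    ((i, d - i) : ℕ × ℕ) ∉ AddSubmonoid.closure A ∧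
    (∀ a ∈ F, ∃ w ∈ AddSubmonoid.closure A, h = (∑ b ∈ F.erase a, b) + w) := by
  have hid : i + 2 ≤ d := by omega
  have hinj : ∀ j ∈ Finset.range i, ∀ k ∈ Finset.range i,
      ((j, d - j) : ℕ × ℕ) = (k, d - k) → j = k := by
    intro j _ k _ hjk
    exact congrArg Prod.fst hjk
  have hsum : (∑ b ∈ F, b) = ∑ j ∈ Finset.range i, ((j, d - j) : ℕ × ℕ) := by
    rw [hF, Finset.sum_image hinj]
  have h1 : h = (∑ b ∈ F, b) + (i, d - i) := by
    rw [hh, Finset.sum_range_succ, hsum]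
  refine ⟨h1, ?_, ?_⟩
  · intro hmem
    have key : ∀ p : ℕ × ℕ, p ∈ AddSubmonoid.closure A →
        p = 0 ∨ (d ≤ p.1 + p.2 ∧ (p.1 + p.2 = d → p ∈ A)) := by
      intro p hp
      induction hp using AddSubmonoid.closure_induction with
      | mem x hx =>
        right
        rw [hA] at hx
        exact ⟨le_of_eq hx.1.symm, fun _ => by rw [hA]; exact hx⟩
      | zero => left; rfl
      | add x y _ _ hx hy =>
        rcases hx with rfl | hx
        · simpa using hy
        rcases hy with rfl | hy
        · simpa using Or.inr hx
        · right
          constructor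
          · have := hx.1
            simp only [Prod.fst_add, Prod.snd_add]
            omega
          · intro hsum
            simp only [Prod.fst_add, Prod.snd_add] at hsum
            have := hx.1; have := hy.1
            omega
    rcases key _ hmem with h0 | ⟨_, hA'⟩
    · have := congrArg Prod.fst h0
      simp at this
      omega
    · have : ((i, d - i) : ℕ × ℕ) ∈ A := hA' (by simp; omega)
      rw [hA] at this
      exact this.2 rfl
  · intro a ha
    rw [hF, Finset.mem_image] at ha
    obtain ⟨j, hj, rfl⟩ := ha
    rw [Finset.mem_range] at hj
    have haF : ((j, d - j) : ℕ × ℕ) ∈ F := by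
      rw [hF]; exact Finset.mem_image.2 ⟨j, Finset.mem_range.2 hj, rfl⟩
    have hsplit : h = (∑ b ∈ F.erase ((j, d - j) : ℕ × ℕ), b)
        + ((j, d - j) + (i, d - i)) := by
      rw [h1, ← Finset.sum_erase_add F _ haF, add_assoc]
    rcases Nat.eq_zero_or_pos j with rfl | hjpos
    · refine ⟨(1, d - 1) + (i - 1, d - (i - 1)), ?_, ?_⟩
      · refine AddSubmonoid.add_mem _ (AddSubmonoid.subset_closure ?_)
          (AddSubmonoid.subset_closure ?_)
        · rw [hA]
          refine ⟨by omega, fun hc => ?_⟩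
          have := congrArg Prod.fst hc; simp at this; try omega
        · rw [hA]
          refine ⟨by omega, fun hc => ?_⟩
          have := congrArg Prod.fst hc; simp at this; try omega
      · rw [hsplit]
        congr 1
        ext <;> simp <;> try omega
    · refine ⟨(j - 1, d - (j - 1)) + (i + 1, d - (i + 1)), ?_, ?_⟩
      · refine AddSubmonoid.add_mem _ (AddSubmonoid.subset_closure ?_)
          (AddSubmonoid.subset_closure ?_)
        · rw [hA]
          refine ⟨by omega, fun hc => ?_⟩
          have := congrArg Prod.fst hc; simp at this; try omega
        · rw [hA]
          refine ⟨by omega, fun hc => ?_⟩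
          have := congrArg Prod.fst hc; simp at this; try omega
      · rw [hsplit]
        congr 1
        ext <;> simp <;> try omega
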